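/- Let Y_1, Y_2, … be random vectors in ℝ^K such that √n(Y_n − μ) converges in distribution to N(0, Σ) for some μ ∈ ℝ^K and positive definite Σ ∈ ℝ^{K×K}. Let μ* = min_k μ_k, S = {k : μ_k = μ*}, Y_n* = min_k Y_{nk}, and W ~ N(0, Σ). Then: (i) min_{k∈S} √n(Y_{nk} − μ*) converges in distribution to min_{k∈S} W_k; (ii) if S^c is nonempty, min_{k∈S^c} √n(Y_{nk} − μ*) → +∞ in probability; and (iii) the sequence √n(Y_n* − μ*) is bounded in probability. -/

import Mathlib

open MeasureTheory Filter Topology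

/-- `ν` is the multivariate normal distribution on `ℝ^K` with mean `m` and covariance
matrix `S`, characterized by the fact that every linear functional `x ↦ ∑ aᵢ xᵢ` has a
(real) Gaussian distribution with mean `∑ aᵢ mᵢ` and variance `aᵀ S a`. -/
def IsGaussianLaw {K : ℕ} (ν : Measure (EuclideanSpace ℝ (Fin K)))
    (m : EuclideanSpace ℝ (Fin K)) (S : Matrix (Fin K) (Fin K) ℝ) : Prop :=
  ∀ a : Fin K → ℝ,
    Measure.map (fun x => ∑ i, a i * x i) ν
      = ProbabilityTheory.gaussianReal (∑ i, a i * m i)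
          (Real.toNNReal (∑ i, ∑ j, a i * S i j * a j))

/-- Convergence in distribution: weak convergence of the laws, expressed through
integrals of bounded continuous functions. -/
def TendstoInDistribution {Ω E : Type*} [MeasurableSpace Ω] [MeasurableSpace E]
    [TopologicalSpace E] (P : Measure Ω) (V : ℕ → Ω → E) (ν : Measure E) : Prop :=
  ∀ f : BoundedContinuousFunction E ℝ,
    Tendsto (fun n => ∫ ω, f (V n ω) ∂P) atTop (𝓝 (∫ x, f x ∂ν))

/-- Bounded in probability (`O_p(1)`). -/
def BoundedInProb {Ω : Type*} [MeasurableSpace Ω] (P : Measure Ω)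
    (X : ℕ → Ω → ℝ) : Prop :=
  ∀ δ : ℝ, 0 < δ → ∃ M : ℝ, 0 < M ∧
    ∀ᶠ n in atTop, P {ω | M < |X n ω|} < ENNReal.ofReal δ

/-- Convergence to `+∞` in probability. -/
def TendstoInfinityInProb {Ω : Type*} [MeasurableSpace Ω] (P : Measure Ω)
    (Y : ℕ → Ω → ℝ) : Prop :=
  ∀ M : ℝ, Tendsto (fun n => P {ω | Y n ω < M}) atTop (𝓝 0)

lemma my_coord_le_norm {K : ℕ} (x : EuclideanSpace ℝ (Fin K)) (k : Fin K) :
    |x k| ≤ ‖x‖ := by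
  rw [EuclideanSpace.norm_eq]
  have h1 : |x k| = Real.sqrt (‖x k‖ ^ 2) := by
    rw [Real.sqrt_sq_eq_abs, abs_norm, Real.norm_eq_abs]
  rw [h1]
  apply Real.sqrt_le_sqrt
  exact Finset.single_le_sum (f := fun i => ‖x i‖ ^ 2) (fun i _ => sq_nonneg _)
    (Finset.mem_univ k)

lemma my_continuous_inf' {K : ℕ} (t : Finset (Fin K)) (ht : t.Nonempty) :
    Continuous (fun x : EuclideanSpace ℝ (Fin K) => t.inf' ht (fun k => x k)) := by
  induction ht using Finset.Nonempty.cons_induction with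
  | singleton a =>
      simp only [Finset.inf'_singleton]
      exact (EuclideanSpace.proj (𝕜 := ℝ) a).continuous
  | cons a s h hs ih =>
      simp only [Finset.inf'_cons hs]
      exact ((EuclideanSpace.proj (𝕜 := ℝ) a).continuous).inf ih

/-- Continuous mapping theorem. -/
lemma my_cmt {K : ℕ} {Ω : Type*} [MeasurableSpace Ω] (P : Measure Ω)
    (V : ℕ → Ω → EuclideanSpace ℝ (Fin K)) (ν : Measure (EuclideanSpace ℝ (Fin K)))
    (h : TendstoInDistribution P V ν) (g : EuclideanSpace ℝ (Fin K) → ℝ)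
    (hg : Continuous g) :
    TendstoInDistribution P (fun n ω => g (V n ω)) (Measure.map g ν) := by
  intro f
  have h2 := h (f.compContinuous ⟨g, hg⟩)
  rw [integral_map hg.aemeasurable f.continuous.aestronglyMeasurable]
  exact h2

/-- Tightness from convergence in distribution. -/
lemma my_tight {K : ℕ} {Ω : Type*} [MeasurableSpace Ω] (P : Measure Ω)
    [IsProbabilityMeasure P] (V : ℕ → Ω → EuclideanSpace ℝ (Fin K))
    (ν : Measure (EuclideanSpace ℝ (Fin K))) [IsProbabilityMeasure ν]
    (h : TendstoInDistribution P V ν) (δ : ℝ) (hδ : 0 < δ) :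
    ∃ R : ℝ, 0 < R ∧ ∀ᶠ n in atTop, P {ω | R < ‖V n ω‖} < ENNReal.ofReal δ := by
  set δ0 : ℝ := min δ 1 with hδ0def
  have hδ0pos : 0 < δ0 := lt_min hδ one_pos
  have hδ0le1 : δ0 ≤ 1 := min_le_right _ _
  -- choose radius
  have hA : ∀ m : ℕ, MeasurableSet {x : EuclideanSpace ℝ (Fin K) | (m : ℝ) ≤ ‖x‖} :=
    fun m => (isClosed_le continuous_const continuous_norm).measurableSet
  have hanti : Antitone (fun m : ℕ => {x : EuclideanSpace ℝ (Fin K) | (m : ℝ) ≤ ‖x‖}) := by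
    intro a b hab x hx
    have hx' : (b : ℝ) ≤ ‖x‖ := hx
    exact le_trans ((Nat.cast_le (α := ℝ)).mpr hab) hx'
  have hInter : (⋂ m : ℕ, {x : EuclideanSpace ℝ (Fin K) | (m : ℝ) ≤ ‖x‖}) = ∅ := by
    ext x
    simp only [Set.mem_iInter, Set.mem_setOf_eq, Set.mem_empty_iff_false, iff_false, not_forall,
      not_le]
    obtain ⟨m, hm⟩ := exists_nat_gt ‖x‖
    exact ⟨m, hm⟩
  have htend := tendsto_measure_iInter_atTop (μ := ν)
    (fun m => (hA m).nullMeasurableSet) hanti ⟨0, measure_ne_top ν _⟩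
  rw [hInter] at htend
  simp only [measure_empty] at htend
  have hhalf : (0 : ENNReal) < ENNReal.ofReal (δ0 / 2) := ENNReal.ofReal_pos.mpr (by linarith)
  obtain ⟨m, hm⟩ := (htend.eventually (gt_mem_nhds hhalf)).exists
  simp only [Function.comp_apply] at hm
  set c : ℝ := (m : ℝ) with hcdef
  refine ⟨c + 1, by positivity, ?_⟩
  -- the bump function
  set F : BoundedContinuousFunction (EuclideanSpace ℝ (Fin K)) ℝ :=
    BoundedContinuousFunction.ofNormedAddCommGroup
      (fun x => max 0 (min 1 (c + 1 - ‖x‖)))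
      (continuous_const.max (continuous_const.min (continuous_const.sub continuous_norm)))
      1
      (fun x => by
        rw [Real.norm_eq_abs, abs_le]
        constructor
        · have := le_max_left (0:ℝ) (min 1 (c + 1 - ‖x‖)); linarith
        · exact max_le (by norm_num) (min_le_left _ _)) with hFdef
  have hFapp : ∀ x, F x = max 0 (min 1 (c + 1 - ‖x‖)) := fun x => rfl
  have hf0 : ∀ x, 0 ≤ F x := fun x => le_max_left _ _
  have hf1 : ∀ x, F x ≤ 1 := fun x => max_le (by norm_num) (min_le_left _ _)
  have hfball : ∀ x : EuclideanSpace ℝ (Fin K), ‖x‖ < c → F x = 1 := by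
    intro x hx
    rw [hFapp, min_eq_left (by linarith), max_eq_right (by norm_num)]
  have hfout : ∀ x : EuclideanSpace ℝ (Fin K), c + 1 < ‖x‖ → F x = 0 := by
    intro x hx
    rw [hFapp, min_eq_right (by linarith), max_eq_left (by linarith)]
  -- lower bound on limit integral
  have hBmeas : MeasurableSet {x : EuclideanSpace ℝ (Fin K) | ‖x‖ < c} :=
    (isOpen_lt continuous_norm continuous_const).measurableSet
  have hFint : Integrable (fun x => F x) ν := F.integrable ν
  have hIndInt : Integrable
      (Set.indicator {x : EuclideanSpace ℝ (Fin K) | ‖x‖ < c} (fun _ => (1:ℝ))) ν :=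
    (integrable_const (1:ℝ)).indicator hBmeas
  have hmono : Set.indicator {x : EuclideanSpace ℝ (Fin K) | ‖x‖ < c} (fun _ => (1:ℝ))
      ≤ fun x => F x := by
    intro x
    by_cases hx : ‖x‖ < c
    · have hxm : x ∈ {x : EuclideanSpace ℝ (Fin K) | ‖x‖ < c} := hx
      simp only [Set.indicator_apply, if_pos hxm, hfball x hx, le_refl]
    · have hxm : x ∉ {x : EuclideanSpace ℝ (Fin K) | ‖x‖ < c} := hx
      simp only [Set.indicator_apply, if_neg hxm]
      exact hf0 x
  have hlow : 1 - δ0 / 2 < ∫ x, F x ∂ν := by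
    have h1 : ∫ x, Set.indicator {x : EuclideanSpace ℝ (Fin K) | ‖x‖ < c}
        (fun _ => (1:ℝ)) x ∂ν = (ν {x | ‖x‖ < c}).toReal := by
      rw [integral_indicator_const (1:ℝ) hBmeas, smul_eq_mul, mul_one]
      rfl
    have h2 : (ν {x : EuclideanSpace ℝ (Fin K) | ‖x‖ < c}).toReal > 1 - δ0 / 2 := by
      have hcompl : {x : EuclideanSpace ℝ (Fin K) | ‖x‖ < c}
          = {x : EuclideanSpace ℝ (Fin K) | c ≤ ‖x‖}ᶜ := by
        ext x; simp [not_le]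
      rw [hcompl, measure_compl (hA m) (measure_ne_top ν _), measure_univ,
        ENNReal.toReal_sub_of_le prob_le_one ENNReal.one_ne_top, ENNReal.toReal_one]
      have := ENNReal.toReal_lt_of_lt_ofReal hm
      linarith
    calc 1 - δ0 / 2 < (ν {x : EuclideanSpace ℝ (Fin K) | ‖x‖ < c}).toReal := h2
      _ = _ := h1.symm
      _ ≤ ∫ x, F x ∂ν := integral_mono hIndInt hFint hmono
  have hev : ∀ᶠ n in atTop, 1 - δ0 < ∫ ω, F (V n ω) ∂P := by
    refine (h F).eventually (lt_mem_nhds ?_)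
    linarith
  filter_upwards [hev] with n hn
  have hpos : 0 < ∫ ω, F (V n ω) ∂P := lt_of_le_of_lt (by linarith) hn
  have hInt : Integrable (fun ω => F (V n ω)) P := by
    by_contra hc
    rw [integral_undef hc] at hpos
    exact lt_irrefl _ hpos
  have hG : Integrable (fun ω => 1 - F (V n ω)) P := (integrable_const 1).sub hInt
  have hGnn : 0 ≤ᵐ[P] (fun ω => 1 - F (V n ω)) :=
    Filter.Eventually.of_forall (fun ω => by simp only [Pi.zero_apply]; linarith [hf1 (V n ω)])
  have hsub : {ω | c + 1 < ‖V n ω‖}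
      ⊆ {ω | (1 : ENNReal) ≤ ENNReal.ofReal (1 - F (V n ω))} := by
    intro ω hω
    have := hfout _ hω
    simp only [Set.mem_setOf_eq, this, sub_zero, ENNReal.ofReal_one, le_refl]
  have hkey : P {ω | c + 1 < ‖V n ω‖} ≤ ENNReal.ofReal (∫ ω, 1 - F (V n ω) ∂P) := by
    refine le_trans (measure_mono hsub) ?_
    have hmark := mul_meas_ge_le_lintegral₀
      (ENNReal.measurable_ofReal.comp_aemeasurable hG.aemeasurable) 1
    rw [one_mul] at hmark
    rw [ofReal_integral_eq_lintegral_ofReal hG hGnn]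
    exact hmark
  have hval : ∫ ω, 1 - F (V n ω) ∂P = 1 - ∫ ω, F (V n ω) ∂P := by
    rw [integral_sub (integrable_const 1) hInt]
    simp
  rw [hval] at hkey
  refine lt_of_le_of_lt hkey ?_
  refine lt_of_lt_of_le ((ENNReal.ofReal_lt_ofReal_iff hδ0pos).mpr (by linarith)) ?_
  exact ENNReal.ofReal_le_ofReal (min_le_left _ _)

theorem stmt7aux {K : ℕ} (hK : 1 ≤ K)
    {Ω : Type*} [MeasurableSpace Ω] (P : Measure Ω) [IsProbabilityMeasure P]
    (Y : ℕ → Ω → EuclideanSpace ℝ (Fin K))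
    (μ : EuclideanSpace ℝ (Fin K))
    (ν : Measure (EuclideanSpace ℝ (Fin K))) [IsProbabilityMeasure ν]
    (hclt : TendstoInDistribution P
      (fun n ω => (Real.sqrt n) • (Y n ω - μ)) ν) :
    (TendstoInDistribution P
        (fun n ω => sInf ((fun k => Real.sqrt n * (Y n ω k - sInf (Set.range fun j => μ j)))
            '' {k | μ k = sInf (Set.range fun j => μ j)}))
        (Measure.map
          (fun x : EuclideanSpace ℝ (Fin K) =>
            sInf ((fun k => x k) '' {k | μ k = sInf (Set.range fun j => μ j)})) ν)) ∧
    (({k | μ k = sInf (Set.range fun j => μ j)}ᶜ : Set (Fin K)).Nonempty →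
      ∀ M : ℝ, Tendsto (fun n : ℕ => P {ω | sInf ((fun k => Real.sqrt n * (Y n ω k - sInf (Set.range fun j => μ j)))
            '' {k | μ k = sInf (Set.range fun j => μ j)}ᶜ) < M}) atTop (𝓝 0)) ∧
    (∀ δ : ℝ, 0 < δ → ∃ M : ℝ, 0 < M ∧
      ∀ᶠ n : ℕ in atTop, P {ω | M < |Real.sqrt n *
        (sInf (Set.range fun k => Y n ω k) - sInf (Set.range fun j => μ j))|}
          < ENNReal.ofReal δ) := by
  classical
  haveI : Nonempty (Fin K) := ⟨⟨0, hK⟩⟩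
  set μstar := sInf (Set.range fun j => μ j) with hμstardef
  have hrange_ne : (Set.range fun j => μ j).Nonempty := Set.range_nonempty _
  obtain ⟨k0, hk0⟩ := hrange_ne.csInf_mem (Set.finite_range _)
  have hle : ∀ k, μstar ≤ μ k := fun k =>
    csInf_le (Set.finite_range _).bddBelow ⟨k, rfl⟩
  have hVcoord : ∀ (n : ℕ) (ω : Ω) (k : Fin K),
      (((Real.sqrt n) • (Y n ω - μ)) : EuclideanSpace ℝ (Fin K)) k
        = Real.sqrt n * (Y n ω k - μ k) := by
    intro n ω k
    simp [PiLp.smul_apply, PiLp.sub_apply, smul_eq_mul]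
  set Sset : Set (Fin K) := {k | μ k = μstar} with hSsetdef
  have hS_ne : Sset.Nonempty := ⟨k0, hk0⟩
  refine ⟨?_, ?_, ?_⟩
  · -- part (i)
    have htS : Sset.toFinite.toFinset.Nonempty :=
      (Set.Finite.toFinset_nonempty _).mpr hS_ne
    have hg : Continuous (fun x : EuclideanSpace ℝ (Fin K) =>
        sInf ((fun k => x k) '' Sset)) := by
      have hrw : ∀ x : EuclideanSpace ℝ (Fin K),
          sInf ((fun k => x k) '' Sset)
            = Sset.toFinite.toFinset.inf' htS (fun k => x k) := by
        intro x
        rw [Finset.inf'_eq_csInf_image, Set.Finite.coe_toFinset]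
      simp_rw [hrw]
      exact my_continuous_inf' _ htS
    have h1 := my_cmt P _ ν hclt
      (fun x : EuclideanSpace ℝ (Fin K) => sInf ((fun k => x k) '' Sset)) hg
    have heq : (fun (n : ℕ) (ω : Ω) =>
          sInf ((fun k => Real.sqrt n * (Y n ω k - μstar)) '' Sset))
        = fun (n : ℕ) (ω : Ω) => sInf ((fun k =>
            (((Real.sqrt n) • (Y n ω - μ)) : EuclideanSpace ℝ (Fin K)) k) '' Sset) := by
      funext n ω
      congr 1
      apply Set.image_congr
      intro k hk
      have hk' : μ k = μstar := hk
      rw [hVcoord n ω k, hk']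
    rw [heq]
    exact h1
  · -- part (ii)
    intro hScne M
    rw [ENNReal.tendsto_atTop_zero]
    intro ε hε
    have hεne : (min 1 ε) ≠ ⊤ := ne_top_of_le_ne_top ENNReal.one_ne_top (min_le_left _ _)
    set δ : ℝ := (min 1 ε).toReal with hδdef
    have hmin_pos : (0 : ENNReal) < min 1 ε := lt_min zero_lt_one hε
    have hδpos : 0 < δ := ENNReal.toReal_pos hmin_pos.ne' hεne
    have hofδ : ENNReal.ofReal δ ≤ ε := by
      rw [hδdef, ENNReal.ofReal_toReal hεne]
      exact min_le_right _ _
    obtain ⟨R, hRpos, hRev⟩ := my_tight P _ ν hclt δ hδpos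
    obtain ⟨N1, hN1⟩ := eventually_atTop.mp hRev
    have htSc : (Ssetᶜ).toFinite.toFinset.Nonempty :=
      (Set.Finite.toFinset_nonempty _).mpr hScne
    set gap : ℝ := (Ssetᶜ).toFinite.toFinset.inf' htSc (fun k => μ k - μstar) with hgapdef
    have hgap : 0 < gap := by
      rw [hgapdef, Finset.lt_inf'_iff]
      intro k hk
      have hk' : k ∈ Ssetᶜ := (Set.Finite.mem_toFinset _).mp hk
      have hne : μ k ≠ μstar := hk'
      rcases lt_or_eq_of_le (hle k) with h | h
      · linarith
      · exact absurd h.symm hne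
    set c : ℝ := max 0 ((M + R) / gap) with hcdef
    refine ⟨max N1 ⌈c ^ 2⌉₊, fun n hn => ?_⟩
    have hn1 : N1 ≤ n := le_trans (le_max_left _ _) hn
    have hn2 : ⌈c ^ 2⌉₊ ≤ n := le_trans (le_max_right _ _) hn
    have hsqrt : M + R ≤ Real.sqrt n * gap := by
      have hc : c ≤ Real.sqrt n := by
        rw [Real.le_sqrt (le_max_left _ _) (Nat.cast_nonneg n)]
        calc c ^ 2 ≤ (⌈c ^ 2⌉₊ : ℝ) := Nat.le_ceil _
          _ ≤ (n : ℝ) := by exact_mod_cast Nat.cast_le.mpr hn2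
      have hdiv : (M + R) / gap ≤ Real.sqrt n := le_trans (le_max_right _ _) hc
      calc M + R = ((M + R) / gap) * gap := by field_simp
        _ ≤ Real.sqrt n * gap := mul_le_mul_of_nonneg_right hdiv hgap.le
    have hsubset : {ω | sInf ((fun k => Real.sqrt n * (Y n ω k - μstar)) '' Ssetᶜ) < M}
        ⊆ {ω | R < ‖((Real.sqrt n) • (Y n ω - μ) : EuclideanSpace ℝ (Fin K))‖} := by
      intro ω hω
      have hω' : sInf ((fun k => Real.sqrt n * (Y n ω k - μstar)) '' Ssetᶜ) < M := hω
      obtain ⟨k, hkSc, hkeq⟩ :=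
        (hScne.image (fun k => Real.sqrt n * (Y n ω k - μstar))).csInf_mem
          ((Set.toFinite _).image _)
      have h2 : Real.sqrt n * (Y n ω k - μstar) < M := lt_of_le_of_lt (le_of_eq hkeq) hω'
      have h3 : gap ≤ μ k - μstar :=
        Finset.inf'_le _ ((Set.Finite.mem_toFinset _).mpr hkSc)
      have h5 : Real.sqrt n * gap ≤ Real.sqrt n * (μ k - μstar) :=
        mul_le_mul_of_nonneg_left h3 (Real.sqrt_nonneg _)
      have he : Real.sqrt n * (Y n ω k - μ k)
          = Real.sqrt n * (Y n ω k - μstar) - Real.sqrt n * (μ k - μstar) := by ring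
      have h6 : (((Real.sqrt n) • (Y n ω - μ)) : EuclideanSpace ℝ (Fin K)) k < -R := by
        rw [hVcoord n ω k, he]
        linarith
      have h7 := my_coord_le_norm ((Real.sqrt n) • (Y n ω - μ)) k
      have h8 := neg_le_abs ((((Real.sqrt n) • (Y n ω - μ)) : EuclideanSpace ℝ (Fin K)) k)
      show R < ‖((Real.sqrt n) • (Y n ω - μ) : EuclideanSpace ℝ (Fin K))‖
      linarith
    calc P {ω | sInf ((fun k => Real.sqrt n * (Y n ω k - μstar)) '' Ssetᶜ) < M}
        ≤ P {ω | R < ‖((Real.sqrt n) • (Y n ω - μ) : EuclideanSpace ℝ (Fin K))‖} :=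
          measure_mono hsubset
      _ ≤ ENNReal.ofReal δ := (hN1 n hn1).le
      _ ≤ ε := hofδ
  · -- part (iii)
    intro δ hδ
    obtain ⟨R, hRpos, hRev⟩ := my_tight P _ ν hclt δ hδ
    refine ⟨R, hRpos, ?_⟩
    refine hRev.mono fun n hn => lt_of_le_of_lt (measure_mono ?_) hn
    intro ω hω
    have hω' : R < |Real.sqrt n * (sInf (Set.range fun k => Y n ω k) - μstar)| := hω
    obtain ⟨k1, hk1⟩ :=
      (Set.range_nonempty (fun k => Y n ω k)).csInf_mem (Set.finite_range _)
    set m := sInf (Set.range fun k => Y n ω k) with hmdef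
    have hnorm := fun k => my_coord_le_norm ((Real.sqrt n) • (Y n ω - μ)) k
    have hupper : Real.sqrt n * (m - μstar)
        ≤ ‖((Real.sqrt n) • (Y n ω - μ) : EuclideanSpace ℝ (Fin K))‖ := by
      have h8 : m ≤ Y n ω k0 := csInf_le (Set.finite_range _).bddBelow ⟨k0, rfl⟩
      have h9 : Real.sqrt n * (m - μstar) ≤ Real.sqrt n * (Y n ω k0 - μ k0) := by
        apply mul_le_mul_of_nonneg_left _ (Real.sqrt_nonneg _)
        have : μ k0 = μstar := hk0
        linarith
      have h10 := hVcoord n ω k0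
      have h11 := le_abs_self ((((Real.sqrt n) • (Y n ω - μ)) : EuclideanSpace ℝ (Fin K)) k0)
      have h12 := hnorm k0
      linarith
    have hlower : -‖((Real.sqrt n) • (Y n ω - μ) : EuclideanSpace ℝ (Fin K))‖
        ≤ Real.sqrt n * (m - μstar) := by
      have h8 : Real.sqrt n * (Y n ω k1 - μ k1) ≤ Real.sqrt n * (m - μstar) := by
        apply mul_le_mul_of_nonneg_left _ (Real.sqrt_nonneg _)
        have h9 := hle k1
        have h10 : Y n ω k1 = m := hk1
        linarith
      have h10 := hVcoord n ω k1
      have h11 := neg_le_abs ((((Real.sqrt n) • (Y n ω - μ)) : EuclideanSpace ℝ (Fin K)) k1)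
      have h12 := hnorm k1
      have h13 := neg_abs_le ((((Real.sqrt n) • (Y n ω - μ)) : EuclideanSpace ℝ (Fin K)) k1)
      linarith
    show R < ‖((Real.sqrt n) • (Y n ω - μ) : EuclideanSpace ℝ (Fin K))‖
    rcases abs_cases (Real.sqrt n * (m - μstar)) with ⟨ha, _⟩ | ⟨ha, _⟩
    · rw [ha] at hω'; linarith
    · rw [ha] at hω'; linarith

/-- Suppose `√n (Y_n − μ) ⇒ N(0, Σ)` with `Σ` positive definite.  Let
`μ* = min_k μ_k`, `S = {k : μ_k = μ*}` and `Y_n* = min_k Y_{nk}`.  Then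
(i) `min_{k ∈ S} √n (Y_{nk} − μ*)` converges in distribution to `min_{k ∈ S} W_k`
    where `W ∼ N(0, Σ)`;
(ii) if `Sᶜ ≠ ∅`, then `min_{k ∈ Sᶜ} √n (Y_{nk} − μ*) → +∞` in probability;
(iii) `√n (Y_n* − μ*)` is bounded in probability. -/
theorem stmt7 {K : ℕ} (hK : 1 ≤ K)
    {Ω : Type*} [MeasurableSpace Ω] (P : Measure Ω) [IsProbabilityMeasure P]
    (Y : ℕ → Ω → EuclideanSpace ℝ (Fin K))
    (μ : EuclideanSpace ℝ (Fin K)) (Sig : Matrix (Fin K) (Fin K) ℝ) (hSig : Sig.PosDef)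
    (ν : Measure (EuclideanSpace ℝ (Fin K))) [IsProbabilityMeasure ν]
    (hν : IsGaussianLaw ν 0 Sig)
    (hclt : TendstoInDistribution P
      (fun n ω => (Real.sqrt n) • (Y n ω - μ)) ν) :
    (TendstoInDistribution P
        (fun n ω => sInf ((fun k => Real.sqrt n * (Y n ω k - sInf (Set.range fun j => μ j)))
            '' {k | μ k = sInf (Set.range fun j => μ j)}))
        (Measure.map
          (fun x : EuclideanSpace ℝ (Fin K) =>
            sInf ((fun k => x k) '' {k | μ k = sInf (Set.range fun j => μ j)})) ν)) ∧
    (({k | μ k = sInf (Set.range fun j => μ j)}ᶜ : Set (Fin K)).Nonempty →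
      TendstoInfinityInProb P
        (fun n ω => sInf ((fun k => Real.sqrt n * (Y n ω k - sInf (Set.range fun j => μ j)))
            '' {k | μ k = sInf (Set.range fun j => μ j)}ᶜ))) ∧
    BoundedInProb P
      (fun n ω => Real.sqrt n *
        (sInf (Set.range fun k => Y n ω k) - sInf (Set.range fun j => μ j))) := by
  obtain ⟨h1, h2, h3⟩ := stmt7aux hK P Y μ ν hclt
  exact ⟨h1, fun hne => h2 hne, h3⟩
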